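/- arXiv:1609.06236 — 7 statements merged into one kernel-verified Lean document; each statement's English description precedes it below -/
import Mathlib

section
/- In the equilateral reference triangle with vertices P1=(0,0), P2=(1,0), P3=(1/2,√3/2), define P4(s)=P1+s(P2−P1), P5(t)=P2+t(P3−P2), P6(r)=P1+r(P3−P1). For any r,s∈(0,1/2] and t=1/2 (Configuration A), every interior angle of the triangle with vertices P4(s), P5(1/2), P6(r) is at most 150°. -/
open EuclideanGeometry Real Set

private lemma arccos_le_5pi6' {t : ℝ} (h : -(Real.sqrt 3 / 2) ≤ t) :
    Real.arccos t ≤ 5 * π / 6 := by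
  have hpi : (0:ℝ) < π := Real.pi_pos
  have h2 : Real.arcsin (Real.sqrt 3 / 2) = π / 3 := by
    rw [← Real.sin_pi_div_three]
    exact Real.arcsin_sin (by linarith) (by linarith)
  have h3 : Real.arcsin (-(Real.sqrt 3 / 2)) = -(π / 3) := by
    rw [Real.arcsin_neg, h2]
  have h1 : Real.arcsin (-(Real.sqrt 3 / 2)) ≤ Real.arcsin t := Real.monotone_arcsin h
  rw [h3] at h1
  rw [Real.arccos]
  linarith

private lemma angle_le_of_inner' (x y : EuclideanSpace ℝ (Fin 2))
    (h : -(Real.sqrt 3 / 2) * (‖x‖ * ‖y‖) ≤ inner ℝ x y) :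
    InnerProductGeometry.angle x y ≤ 5 * π / 6 := by
  rw [InnerProductGeometry.angle]
  apply arccos_le_5pi6'
  rcases eq_or_lt_of_le (mul_nonneg (norm_nonneg x) (norm_nonneg y)) with h0 | h0
  · rw [← h0, div_zero]
    have := Real.sqrt_nonneg 3
    linarith
  · rw [le_div_iff₀ h0]
    calc -(Real.sqrt 3 / 2) * (‖x‖ * ‖y‖) ≤ (inner ℝ x y : ℝ) := h

private lemma key_ineq' (a b c : ℝ) (ha : 0 ≤ a) (hb : 0 ≤ b)
    (h : c ^ 2 ≤ 3 / 4 * (a ^ 2 * b ^ 2)) :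
    -(Real.sqrt 3 / 2) * (a * b) ≤ c := by
  have hs3 : Real.sqrt 3 ^ 2 = 3 := Real.sq_sqrt (by norm_num)
  have hs3n : (0:ℝ) ≤ Real.sqrt 3 := Real.sqrt_nonneg 3
  by_contra hlt
  push_neg at hlt
  have hab : (0:ℝ) ≤ Real.sqrt 3 / 2 * (a * b) := by positivity
  have hcneg : c < 0 := by nlinarith
  nlinarith [mul_pos (neg_pos.2 hcneg) (neg_pos.2 hcneg)]

private lemma inner_comp (x y : EuclideanSpace ℝ (Fin 2)) :
    (inner ℝ x y : ℝ) = x 0 * y 0 + x 1 * y 1 := by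
  simp [PiLp.inner_apply, Fin.sum_univ_two, RCLike.inner_apply]
  ring

private lemma norm_sq_comp (x : EuclideanSpace ℝ (Fin 2)) :
    ‖x‖ ^ 2 = x 0 ^ 2 + x 1 ^ 2 := by
  rw [← real_inner_self_eq_norm_sq]
  simp only [PiLp.inner_apply, Fin.sum_univ_two, RCLike.inner_apply, conj_trivial]
  ring

private lemma vec_sub (a b c d : ℝ) :
    (!₂[a, b] : EuclideanSpace ℝ (Fin 2)) - (!₂[c, d] : EuclideanSpace ℝ (Fin 2))
      = (!₂[a - c, b - d] : EuclideanSpace ℝ (Fin 2)) := by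
  ext i; fin_cases i
  · show a - c = a - c; rfl
  · show b - d = b - d; rfl

private lemma angle_le_aux2 (x y : EuclideanSpace ℝ (Fin 2))
    (h : 0 ≤ (inner ℝ x y : ℝ)) :
    InnerProductGeometry.angle x y ≤ 5 * π / 6 := by
  apply angle_le_of_inner' x y
  have h2 : (0:ℝ) ≤ Real.sqrt 3 / 2 * (‖x‖ * ‖y‖) := by positivity
  linarith

private lemma angle_le_aux (x y : EuclideanSpace ℝ (Fin 2))
    (h : (inner ℝ x y : ℝ) ^ 2 ≤ 3 / 4 * (‖x‖ ^ 2 * ‖y‖ ^ 2)) :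
    InnerProductGeometry.angle x y ≤ 5 * π / 6 :=
  angle_le_of_inner' x y (key_ineq' ‖x‖ ‖y‖ _ (norm_nonneg x) (norm_nonneg y) h)

set_option maxHeartbeats 1000000 in
theorem stmt_0
    (P1 P2 P3 : EuclideanSpace ℝ (Fin 2))
    (hP1 : P1 = !₂[0, 0]) (hP2 : P2 = !₂[1, 0]) (hP3 : P3 = !₂[1/2, Real.sqrt 3 / 2])
    (r s : ℝ) (hr : r ∈ Set.Ioc (0:ℝ) (1/2)) (hs : s ∈ Set.Ioc (0:ℝ) (1/2))
    (P4 P5 P6 : EuclideanSpace ℝ (Fin 2))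
    (hP4 : P4 = P1 + s • (P2 - P1))
    (hP5 : P5 = P2 + (1/2 : ℝ) • (P3 - P2))
    (hP6 : P6 = P1 + r • (P3 - P1)) :
    ∠ P6 P4 P5 ≤ 5 * π / 6 ∧ ∠ P4 P5 P6 ≤ 5 * π / 6 ∧ ∠ P5 P6 P4 ≤ 5 * π / 6 := by
  obtain ⟨hr0, hr2⟩ := hr
  obtain ⟨hs0, hs2⟩ := hs
  have hs3 : Real.sqrt 3 ^ 2 = 3 := Real.sq_sqrt (by norm_num)
  have h4 : P4 = (!₂[s, 0] : EuclideanSpace ℝ (Fin 2)) := by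
    subst hP1 hP2 hP4
    ext i; fin_cases i
    · show (0:ℝ) + s • ((1:ℝ) - 0) = s; simp
    · show (0:ℝ) + s • ((0:ℝ) - 0) = 0; simp
  have h5 : P5 = (!₂[3/4, Real.sqrt 3 / 4] : EuclideanSpace ℝ (Fin 2)) := by
    subst hP2 hP3 hP5
    ext i; fin_cases i
    · show (1:ℝ) + (1/2 : ℝ) • ((1/2:ℝ) - 1) = 3/4; norm_num
    · show (0:ℝ) + (1/2 : ℝ) • (Real.sqrt 3 / 2 - 0) = Real.sqrt 3 / 4
      rw [smul_eq_mul]; ring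
  have h6 : P6 = (!₂[r / 2, r * (Real.sqrt 3 / 2)] : EuclideanSpace ℝ (Fin 2)) := by
    subst hP1 hP3 hP6
    ext i; fin_cases i
    · show (0:ℝ) + r • ((1/2:ℝ) - 0) = r / 2; simp; ring
    · show (0:ℝ) + r • (Real.sqrt 3 / 2 - 0) = r * (Real.sqrt 3 / 2); simp
  refine ⟨?_, ?_, ?_⟩
  · -- angle at P4
    rw [EuclideanGeometry.angle, vsub_eq_sub, vsub_eq_sub, h4, h5, h6, vec_sub, vec_sub]
    apply angle_le_aux
    rw [inner_comp, norm_sq_comp, norm_sq_comp]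
    simp only [PiLp.toLp_apply, Matrix.cons_val_zero, Matrix.cons_val_one, Matrix.head_cons]
    have hC : (r / 2 - s) * (3 / 4 - s) + (r * (Real.sqrt 3 / 2) - 0) * (Real.sqrt 3 / 4 - 0)
        = 3*r/4 - r*s/2 - 3*s/4 + s^2 := by
      linear_combination (r/8) * hs3
    have hA : (r / 2 - s) ^ 2 + (r * (Real.sqrt 3 / 2) - 0) ^ 2 = r^2 - r*s + s^2 := by
      linear_combination (r^2/4) * hs3
    have hB : (3 / 4 - s) ^ 2 + (Real.sqrt 3 / 4 - 0) ^ 2 = s^2 - 3*s/2 + 3/4 := by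
      linear_combination (1/16 : ℝ) * hs3
    rw [hC, hA, hB]
    nlinarith [mul_nonneg (mul_nonneg hs0.le (sq_nonneg s)) (by linarith : (0:ℝ) ≤ 3/8 - s/4),
      mul_nonneg (mul_nonneg (mul_nonneg hs0.le hr0.le) (by linarith : (0:ℝ) ≤ 1/2 - s))
        (by linarith : (0:ℝ) ≤ 3 - s),
      mul_nonneg (mul_nonneg (mul_nonneg hs0.le hr0.le) (by linarith : (0:ℝ) ≤ 1/2 - r))
        (by linarith : (0:ℝ) ≤ 3/8 - s/2)]
  · -- angle at P5 : inner product is nonnegative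
    rw [EuclideanGeometry.angle, vsub_eq_sub, vsub_eq_sub, h4, h5, h6, vec_sub, vec_sub]
    apply angle_le_aux2
    rw [inner_comp]
    simp only [PiLp.toLp_apply, Matrix.cons_val_zero, Matrix.cons_val_one, Matrix.head_cons]
    have hC : (s - 3/4) * (r/2 - 3/4) + (0 - Real.sqrt 3 / 4) * (r * (Real.sqrt 3 / 2) - Real.sqrt 3 / 4)
        = r*s/2 - 3*s/4 - 3*r/4 + 3/4 := by
      linear_combination (1/16 - r/8) * hs3
    rw [hC]
    nlinarith
  · -- angle at P6
    rw [EuclideanGeometry.angle, vsub_eq_sub, vsub_eq_sub, h4, h5, h6, vec_sub, vec_sub]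
    apply angle_le_aux
    rw [inner_comp, norm_sq_comp, norm_sq_comp]
    simp only [PiLp.toLp_apply, Matrix.cons_val_zero, Matrix.cons_val_one, Matrix.head_cons]
    have hC : (3/4 - r/2) * (s - r/2) + (Real.sqrt 3 / 4 - r * (Real.sqrt 3 / 2)) * (0 - r * (Real.sqrt 3 / 2))
        = r^2 - r*s/2 - 3*r/4 + 3*s/4 := by
      linear_combination (r^2/4 - r/8) * hs3
    have hA : (3/4 - r/2) ^ 2 + (Real.sqrt 3 / 4 - r * (Real.sqrt 3 / 2)) ^ 2 = r^2 - 3*r/2 + 3/4 := by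
      linear_combination ((1/4 - r/2)^2) * hs3
    have hB : (s - r/2) ^ 2 + (0 - r * (Real.sqrt 3 / 2)) ^ 2 = r^2 - r*s + s^2 := by
      linear_combination (r^2/4) * hs3
    rw [hC, hA, hB]
    nlinarith [mul_nonneg (mul_nonneg hr0.le (sq_nonneg r)) (by linarith : (0:ℝ) ≤ 3/8 - r/4),
      mul_nonneg (mul_nonneg (mul_nonneg hr0.le hs0.le) (by linarith : (0:ℝ) ≤ 1/2 - r))
        (by linarith : (0:ℝ) ≤ 3 - r),
      mul_nonneg (mul_nonneg (mul_nonneg hr0.le hs0.le) (by linarith : (0:ℝ) ≤ 1/2 - s))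
        (by linarith : (0:ℝ) ≤ 3/8 - r/2)]
end

section
/- In the equilateral reference triangle with vertices P1=(0,0), P2=(1,0), P3=(1/2,√3/2), with P4(s)=P1+s(P2−P1), P5(t)=P2+t(P3−P2), P6(r)=P1+r(P3−P1), for r=s∈(1/2,1) and t=1−s (Configuration B), the interior angle of triangle P4P5P6 at P5 lies between 60° and 120°. -/
open EuclideanGeometry Real Set

theorem stmt_2
    (P1 P2 P3 : EuclideanSpace ℝ (Fin 2))
    (hP1 : P1 = !₂[0, 0]) (hP2 : P2 = !₂[1, 0]) (hP3 : P3 = !₂[1/2, Real.sqrt 3 / 2])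
    (s : ℝ) (hs : s ∈ Set.Ioo (1/2 : ℝ) 1)
    (P4 P5 P6 : EuclideanSpace ℝ (Fin 2))
    (hP4 : P4 = P1 + s • (P2 - P1))
    (hP5 : P5 = P2 + (1 - s) • (P3 - P2))
    (hP6 : P6 = P1 + s • (P3 - P1)) :
    π / 3 ≤ ∠ P4 P5 P6 ∧ ∠ P4 P5 P6 ≤ 2 * π / 3 := by
  obtain ⟨hs1, hs2⟩ := hs
  have hsq3 : Real.sqrt 3 ^ 2 = 3 := Real.sq_sqrt (by norm_num)
  set u : EuclideanSpace ℝ (Fin 2) := P4 - P5 with hu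
  set v : EuclideanSpace ℝ (Fin 2) := P6 - P5 with hv
  have hu0 : u 0 = (s - 1)/2 := by
    simp [hu, hP1, hP2, hP3, hP4, hP5]; ring
  have hu1 : u 1 = (s - 1) * Real.sqrt 3 / 2 := by
    simp [hu, hP1, hP2, hP3, hP4, hP5]; ring
  have hv0 : v 0 = -(1/2) := by
    simp [hv, hP1, hP2, hP3, hP5, hP6]; ring
  have hv1 : v 1 = (2*s - 1) * Real.sqrt 3 / 2 := by
    simp [hv, hP1, hP2, hP3, hP5, hP6]; ring
  have hinner : (inner ℝ u v : ℝ) = (1 - s) * (2 - 3*s) / 2 := by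
    rw [PiLp.inner_apply]
    simp only [Fin.sum_univ_two, hu0, hu1, hv0, hv1, RCLike.inner_apply, conj_trivial]
    linear_combination ((s-1)*(2*s-1)/4) * hsq3
  have hnu : ‖u‖ = 1 - s := by
    rw [EuclideanSpace.norm_eq]
    simp only [Fin.sum_univ_two, hu0, hu1, Real.norm_eq_abs, sq_abs]
    rw [show ((s-1)/2)^2 + ((s-1)*Real.sqrt 3/2)^2 = (1-s)^2 by
      linear_combination ((s-1)^2/4) * hsq3]
    exact Real.sqrt_sq (by linarith)
  have hnv : ‖v‖ = Real.sqrt (1 + 3*(2*s-1)^2) / 2 := by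
    rw [EuclideanSpace.norm_eq]
    simp only [Fin.sum_univ_two, hv0, hv1, Real.norm_eq_abs, sq_abs]
    rw [show ((-(1/2:ℝ))^2 + ((2*s-1)*Real.sqrt 3/2)^2) = (1 + 3*(2*s-1)^2)/4 by
      linear_combination ((2*s-1)^2/4) * hsq3]
    rw [show (4:ℝ) = 2^2 by norm_num, Real.sqrt_div (by positivity),
      Real.sqrt_sq (by norm_num)]
  -- positivity facts
  have hDpos : (0:ℝ) < 1 + 3*(2*s-1)^2 := by positivity
  have hq : Real.sqrt (1 + 3*(2*s-1)^2) ^ 2 = 1 + 3*(2*s-1)^2 :=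
    Real.sq_sqrt hDpos.le
  have hqpos : 0 < Real.sqrt (1 + 3*(2*s-1)^2) := Real.sqrt_pos.mpr hDpos
  have hcos : Real.cos (∠ P4 P5 P6) =
      (2 - 3*s) / Real.sqrt (1 + 3*(2*s-1)^2) := by
    rw [EuclideanGeometry.angle, InnerProductGeometry.cos_angle]
    rw [show (P4 -ᵥ P5 : EuclideanSpace ℝ (Fin 2)) = u from rfl,
        show (P6 -ᵥ P5 : EuclideanSpace ℝ (Fin 2)) = v from rfl,
        hinner, hnu, hnv]
    have h1s : (0:ℝ) < 1 - s := by linarith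
    rw [div_eq_div_iff (by positivity) hqpos.ne']
    ring
  -- bounds on cos
  have hkey : (2*(2-3*s))^2 ≤ 1 + 3*(2*s-1)^2 := by nlinarith
  have habs : |2*(2-3*s)| ≤ Real.sqrt (1 + 3*(2*s-1)^2) := by
    calc |2*(2-3*s)| = Real.sqrt ((2*(2-3*s))^2) := (Real.sqrt_sq_eq_abs _).symm
    _ ≤ _ := Real.sqrt_le_sqrt hkey
  have hub : Real.cos (∠ P4 P5 P6) ≤ 1/2 := by
    rw [hcos, div_le_iff₀ hqpos]
    have := le_abs_self (2*(2-3*s))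
    linarith
  have hlb : -(1/2) ≤ Real.cos (∠ P4 P5 P6) := by
    rw [hcos, le_div_iff₀ hqpos]
    have := neg_abs_le (2*(2-3*s))
    linarith
  have h0 : 0 ≤ ∠ P4 P5 P6 := EuclideanGeometry.angle_nonneg _ _ _
  have hpi : ∠ P4 P5 P6 ≤ π := EuclideanGeometry.angle_le_pi _ _ _
  have hpi3 : Real.cos (π/3) = 1/2 := Real.cos_pi_div_three
  have hpi23 : Real.cos (2*π/3) = -(1/2) := by
    rw [show (2*π/3 : ℝ) = π - π/3 by ring, Real.cos_pi_sub, hpi3]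
  constructor
  · by_contra h
    push_neg at h
    have := Real.strictAntiOn_cos ⟨h0, hpi⟩ ⟨by positivity, by linarith [Real.pi_pos]⟩ h
    rw [hpi3] at this
    linarith
  · by_contra h
    push_neg at h
    have := Real.strictAntiOn_cos ⟨by positivity, by linarith [Real.pi_pos]⟩ ⟨h0, hpi⟩ h
    rw [hpi23] at this
    linarith
end

section
/- In the equilateral reference triangle with vertices P1=(0,0), P2=(1,0), P3=(1/2,√3/2), set P5=(P2+P3)/2, P4(s)=P1+s(P2−P1), P6(r)=P1+r(P3−P1). For r∈(1/2,1) and s∈(0,1/2] (Configuration C), the interior angle of triangle P4(s)P5P6(r) at P5 satisfies 30° ≤ angle ≤ 120°. -/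
open EuclideanGeometry Real Set
open scoped RealInnerProductSpace

private lemma my_arccos_anti {x y : ℝ} (h : x ≤ y) : Real.arccos y ≤ Real.arccos x := by
  unfold Real.arccos
  linarith [Real.monotone_arcsin h]

private lemma my_sqrt_helper {X c A B : ℝ} (hX : 0 ≤ X) (hc : 0 ≤ c)
    (hA : 0 ≤ A) (hB : 0 ≤ B) (h : X ^ 2 ≤ c ^ 2 * A * B) :
    X ≤ c * (Real.sqrt A * Real.sqrt B) := by
  have h2 := Real.sqrt_le_sqrt h
  rwa [Real.sqrt_sq hX,
    show c ^ 2 * A * B = (c * (Real.sqrt A * Real.sqrt B)) ^ 2 by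
      rw [mul_pow, mul_pow, Real.sq_sqrt hA, Real.sq_sqrt hB]; ring,
    Real.sqrt_sq (by positivity)] at h2

private lemma my_angle_formula (x p y : EuclideanSpace ℝ (Fin 2)) (a b c d : ℝ)
    (h0 : (x - p) 0 = a) (h1 : (x - p) 1 = b) (h2 : (y - p) 0 = c) (h3 : (y - p) 1 = d) :
    ∠ x p y = Real.arccos ((a*c + b*d) /
      (Real.sqrt (a^2 + b^2) * Real.sqrt (c^2 + d^2))) := by
  rw [EuclideanGeometry.angle, InnerProductGeometry.angle, vsub_eq_sub, vsub_eq_sub,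
    PiLp.inner_apply, Fin.sum_univ_two, h0, h1, h2, h3,
    EuclideanSpace.norm_eq, EuclideanSpace.norm_eq, Fin.sum_univ_two, Fin.sum_univ_two,
    h0, h1, h2, h3]
  simp [RCLike.inner_apply, Real.norm_eq_abs, sq_abs]
  rw [mul_comm c a, mul_comm d b]

set_option maxHeartbeats 2000000 in
private lemma my_key1 (r s : ℝ) (hr1 : 1/2 < r) (hr2 : r < 1) (hs1 : 0 < s) (hs2 : s ≤ 1/2) :
    ((s-3/4)*(r/2-3/4) - 3*(2*r-1)/16)^2 ≤
    (3/4) * (((s-3/4)^2+3/16) * ((r/2-3/4)^2 + 3*(2*r-1)^2/16)) := by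
  nlinarith [sq_nonneg (s*(2*r-1)), sq_nonneg ((2*r-1)-s), sq_nonneg (s*(1-r)),
    sq_nonneg ((2*r-1)*s - s), mul_pos hs1 (sub_pos.2 hr1), sq_nonneg (s*r),
    sq_nonneg (r-s), sq_nonneg (r+s-1)]

set_option maxHeartbeats 2000000 in
private lemma my_key2 (r s : ℝ) (hr1 : 1/2 < r) (hr2 : r < 1) (hs1 : 0 < s) (hs2 : s ≤ 1/2)
    (hI : (s-3/4)*(r/2-3/4) - 3*(2*r-1)/16 < 0) :
    ((s-3/4)*(r/2-3/4) - 3*(2*r-1)/16)^2 ≤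
    (1/4) * (((s-3/4)^2+3/16) * ((r/2-3/4)^2 + 3*(2*r-1)^2/16)) := by
  nlinarith [sq_nonneg ((1-r)-(1/2-s)), sq_nonneg ((1-r)+(1/2-s)),
    mul_nonneg (sub_nonneg.2 hr2.le) (sub_nonneg.2 hs2), sq_nonneg ((1-r)*(1/2-s)),
    sq_nonneg ((1-r)*(1/2-s)-(1-r)), sq_nonneg ((1-r)*(1/2-s)-(1/2-s)), hs1.le, hr1.le]

theorem stmt_3
    (P1 P2 P3 : EuclideanSpace ℝ (Fin 2))
    (hP1 : P1 = !₂[0, 0]) (hP2 : P2 = !₂[1, 0]) (hP3 : P3 = !₂[1/2, Real.sqrt 3 / 2])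
    (r s : ℝ) (hr : r ∈ Set.Ioo (1/2 : ℝ) 1) (hs : s ∈ Set.Ioc (0:ℝ) (1/2))
    (P4 P5 P6 : EuclideanSpace ℝ (Fin 2))
    (hP4 : P4 = P1 + s • (P2 - P1))
    (hP5 : P5 = (1/2 : ℝ) • (P2 + P3))
    (hP6 : P6 = P1 + r • (P3 - P1)) :
    π / 6 ≤ ∠ P4 P5 P6 ∧ ∠ P4 P5 P6 ≤ 2 * π / 3 := by
  obtain ⟨hr1, hr2⟩ := hr
  obtain ⟨hs1, hs2⟩ := hs
  have hsq3 : Real.sqrt 3 ^ 2 = 3 := Real.sq_sqrt (by norm_num)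
  have hu0 : (P4 - P5) 0 = s - 3/4 := by
    subst hP1 hP2 hP3 hP4 hP5
    simp [PiLp.sub_apply, PiLp.add_apply, PiLp.smul_apply]
    ring
  have hu1 : (P4 - P5) 1 = -(Real.sqrt 3 / 4) := by
    subst hP1 hP2 hP3 hP4 hP5
    simp [PiLp.sub_apply, PiLp.add_apply, PiLp.smul_apply]
    ring
  have hv0 : (P6 - P5) 0 = r/2 - 3/4 := by
    subst hP1 hP2 hP3 hP5 hP6
    simp [PiLp.sub_apply, PiLp.add_apply, PiLp.smul_apply]
    ring
  have hv1 : (P6 - P5) 1 = Real.sqrt 3 * (2*r - 1) / 4 := by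
    subst hP1 hP2 hP3 hP5 hP6
    simp [PiLp.sub_apply, PiLp.add_apply, PiLp.smul_apply]
    ring
  have hang := my_angle_formula P4 P5 P6 _ _ _ _ hu0 hu1 hv0 hv1
  obtain ⟨A, hA⟩ : ∃ A : ℝ, A = (s - 3/4)^2 + 3/16 := ⟨_, rfl⟩
  obtain ⟨B, hB⟩ : ∃ B : ℝ, B = (r/2 - 3/4)^2 + 3*(2*r - 1)^2/16 := ⟨_, rfl⟩
  obtain ⟨I, hI⟩ : ∃ I : ℝ, I = (s - 3/4)*(r/2 - 3/4) - 3*(2*r - 1)/16 := ⟨_, rfl⟩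
  have hAnn : (0:ℝ) ≤ A := by rw [hA]; positivity
  have hBnn : (0:ℝ) ≤ B := by rw [hB]; positivity
  have e1 : (s - 3/4)*(r/2 - 3/4) + (-(Real.sqrt 3 / 4))*(Real.sqrt 3 * (2*r - 1) / 4) = I := by
    rw [hI]; linear_combination (-(2*r - 1)/16) * hsq3
  have e2 : (s - 3/4)^2 + (-(Real.sqrt 3 / 4))^2 = A := by
    rw [hA]; linear_combination (1/16 : ℝ) * hsq3
  have e3 : (r/2 - 3/4)^2 + (Real.sqrt 3 * (2*r - 1) / 4)^2 = B := by
    rw [hB]; linear_combination ((2*r - 1)^2/16) * hsq3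
  have hang2 : ∠ P4 P5 P6 = Real.arccos (I / (Real.sqrt A * Real.sqrt B)) := by
    rw [hang, e1, e2, e3]
  clear hang e1 e2 e3 hu0 hu1 hv0 hv1 hP4 hP5 hP6 hP1 hP2 hP3 P1 P2 P3
  have hApos : (0:ℝ) < A := by rw [hA]; positivity
  have hBpos : (0:ℝ) < B := by rw [hB]; nlinarith [sq_nonneg (r/2 - 3/4)]
  have hn1pos : 0 < Real.sqrt A := Real.sqrt_pos.2 hApos
  have hn2pos : 0 < Real.sqrt B := Real.sqrt_pos.2 hBpos
  have hnn : 0 < Real.sqrt A * Real.sqrt B := mul_pos hn1pos hn2pos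
  have hub : I / (Real.sqrt A * Real.sqrt B) ≤ Real.sqrt 3 / 2 := by
    rw [div_le_iff₀ hnn]
    rcases le_or_gt I 0 with h | h
    · have : 0 ≤ Real.sqrt 3 / 2 * (Real.sqrt A * Real.sqrt B) := by positivity
      linarith only [h, this]
    · have key : I ^ 2 ≤ (Real.sqrt 3 / 2) ^ 2 * A * B := by
        rw [div_pow, hsq3, hA, hB, hI]
        linarith only [my_key1 r s hr1 hr2 hs1 hs2]
      exact my_sqrt_helper h.le (by positivity) hAnn hBnn key
  have hlb : -(1/2) ≤ I / (Real.sqrt A * Real.sqrt B) := by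
    rw [le_div_iff₀ hnn]
    rcases le_or_gt 0 I with h | h
    · linarith only [h, hnn]
    · have hIlt : (s - 3/4)*(r/2 - 3/4) - 3*(2*r - 1)/16 < 0 := by rw [← hI]; exact h
      have key : (-I) ^ 2 ≤ ((1:ℝ)/2) ^ 2 * A * B := by
        rw [neg_sq, hA, hB, hI]
        linarith only [my_key2 r s hr1 hr2 hs1 hs2 hIlt]
      have := my_sqrt_helper (by linarith : (0:ℝ) ≤ -I) (by norm_num : (0:ℝ) ≤ (1:ℝ)/2)
        hAnn hBnn key
      linarith only [h, this]
  constructor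
  · rw [hang2]
    have h6 : Real.arccos (Real.sqrt 3 / 2) = π / 6 := by
      rw [← Real.cos_pi_div_six]
      exact Real.arccos_cos (by positivity) (by linarith [Real.pi_pos])
    rw [← h6]
    exact my_arccos_anti hub
  · rw [hang2]
    have h3 : Real.arccos (-(1/2)) = 2 * π / 3 := by
      rw [Real.arccos_neg, show ((1:ℝ)/2) = Real.cos (π/3) by rw [Real.cos_pi_div_three],
        Real.arccos_cos (by positivity) (by linarith [Real.pi_pos])]
      ring
    rw [← h3]
    exact my_arccos_anti hlb
end

section
/- In the equilateral reference triangle with vertices P1=(0,0), P2=(1,0), P3=(1/2,√3/2), for r∈(0,1/2] let P4=P1+r(P2−P1), P6=P1+r(P3−P1), and P5=(P2+P3)/2. Then every interior angle of the triangle with vertices P2, P5, P6 is at most 120°. -/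
open EuclideanGeometry Real Set

section helpers

open RealInnerProductSpace

lemma arccos_le_tptd {x : ℝ} (h : -(1/2) ≤ x) : Real.arccos x ≤ 2 * π / 3 := by
  have h13 : Real.arccos (-(1/2)) = 2*π/3 := by
    rw [show (-(1/2):ℝ) = Real.cos (2*π/3) by
      rw [show (2*π/3 : ℝ) = π - π/3 by ring, Real.cos_pi_sub, Real.cos_pi_div_three]]
    exact Real.arccos_cos (by positivity) (by linarith [Real.pi_pos])
  rw [← h13]
  unfold Real.arccos
  have := Real.monotone_arcsin h
  linarith

lemma angle_le_tptd (u v : EuclideanSpace ℝ (Fin 2))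
    (h : -(1/2) * (‖u‖ * ‖v‖) ≤ ⟪u, v⟫) :
    InnerProductGeometry.angle u v ≤ 2 * π / 3 := by
  rw [InnerProductGeometry.angle]
  apply arccos_le_tptd
  rcases eq_or_lt_of_le (mul_nonneg (norm_nonneg u) (norm_nonneg v)) with h0 | h0
  · rw [← h0, div_zero]; norm_num
  · rw [le_div_iff₀ h0]; linarith

lemma euc_inner_tptd (x y : EuclideanSpace ℝ (Fin 2)) (a b c d : ℝ)
    (hx : x = !₂[a,b]) (hy : y = !₂[c,d]) : ⟪x, y⟫ = a*c + b*d := by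
  subst hx hy
  simp [PiLp.inner_apply, Fin.sum_univ_two]; ring

lemma euc_norm_tptd (x : EuclideanSpace ℝ (Fin 2)) (a b : ℝ)
    (hx : x = !₂[a,b]) : ‖x‖ = Real.sqrt (a^2 + b^2) := by
  subst hx
  rw [EuclideanSpace.norm_eq]
  simp [Fin.sum_univ_two, sq]

lemma euc_sub_tptd (x y : EuclideanSpace ℝ (Fin 2)) (a b c d : ℝ)
    (hx : x = !₂[a,b]) (hy : y = !₂[c,d]) : x - y = !₂[a-c, b-d] := by
  subst hx hy; ext i; fin_cases i <;> simp

end helpers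

set_option maxHeartbeats 1000000 in
theorem stmt_5
    (P1 P2 P3 : EuclideanSpace ℝ (Fin 2))
    (hP1 : P1 = !₂[0, 0]) (hP2 : P2 = !₂[1, 0]) (hP3 : P3 = !₂[1/2, Real.sqrt 3 / 2])
    (r : ℝ) (hr : r ∈ Set.Ioc (0:ℝ) (1/2))
    (P4 P5 P6 : EuclideanSpace ℝ (Fin 2))
    (hP4 : P4 = P1 + r • (P2 - P1))
    (hP6 : P6 = P1 + r • (P3 - P1))
    (hP5 : P5 = (1/2 : ℝ) • (P2 + P3)) :
    ∠ P5 P2 P6 ≤ 2 * π / 3 ∧ ∠ P2 P5 P6 ≤ 2 * π / 3 ∧ ∠ P2 P6 P5 ≤ 2 * π / 3 := by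
  obtain ⟨hr0, hr1⟩ := hr
  have s3 : Real.sqrt 3 ^ 2 = 3 := Real.sq_sqrt (by norm_num)
  have s3n : (0:ℝ) ≤ Real.sqrt 3 := Real.sqrt_nonneg 3
  have hE5 : P5 = !₂[3/4, Real.sqrt 3 / 4] := by
    rw [hP5, hP2, hP3]; ext i; fin_cases i <;> simp <;> ring
  have hE6 : P6 = !₂[r/2, r * Real.sqrt 3 / 2] := by
    rw [hP6, hP1, hP3]; ext i; fin_cases i <;> simp <;> ring
  have h52 := euc_sub_tptd P5 P2 _ _ _ _ hE5 hP2
  have h62 := euc_sub_tptd P6 P2 _ _ _ _ hE6 hP2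
  have h25 := euc_sub_tptd P2 P5 _ _ _ _ hP2 hE5
  have h65 := euc_sub_tptd P6 P5 _ _ _ _ hE6 hE5
  have h26 := euc_sub_tptd P2 P6 _ _ _ _ hP2 hE6
  have h56 := euc_sub_tptd P5 P6 _ _ _ _ hE5 hE6
  refine ⟨?_, ?_, ?_⟩
  · rw [EuclideanGeometry.angle, vsub_eq_sub, vsub_eq_sub]
    apply angle_le_tptd
    rw [euc_inner_tptd _ _ _ _ _ _ h52 h62]
    have hp := mul_nonneg (norm_nonneg (P5 - P2)) (norm_nonneg (P6 - P2))
    nlinarith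
  · rw [EuclideanGeometry.angle, vsub_eq_sub, vsub_eq_sub]
    apply angle_le_tptd
    rw [euc_inner_tptd _ _ _ _ _ _ h25 h65, euc_norm_tptd _ _ _ h25, euc_norm_tptd _ _ _ h65]
    have h1 : Real.sqrt ((1-3/4)^2 + (0 - Real.sqrt 3/4)^2) = 1/2 := by
      rw [show ((1-3/4)^2 + (0 - Real.sqrt 3/4)^2 : ℝ) = (1/2)^2 by linear_combination (1/16) * s3]
      exact Real.sqrt_sq (by norm_num)
    have h2 : r ≤ Real.sqrt ((r/2-3/4)^2 + (r*Real.sqrt 3/2 - Real.sqrt 3/4)^2) := by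
      rw [show ((r/2-3/4)^2 + (r*Real.sqrt 3/2 - Real.sqrt 3/4)^2 : ℝ)
          = r^2 - 3*r/2 + 3/4 by linear_combination ((r/2-1/4)^2) * s3]
      have h2' : r^2 ≤ r^2 - 3*r/2 + 3/4 := by linarith
      exact (Real.le_sqrt' hr0).mpr h2'
    have hi : (1-3/4)*(r/2-3/4) + (0 - Real.sqrt 3/4)*(r*Real.sqrt 3/2 - Real.sqrt 3/4)
        = -(r/4) := by linear_combination (1/16 - r/8) * s3
    rw [h1, hi]
    linarith
  · rw [EuclideanGeometry.angle, vsub_eq_sub, vsub_eq_sub]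
    apply angle_le_tptd
    rw [euc_inner_tptd _ _ _ _ _ _ h26 h56]
    have hp := mul_nonneg (norm_nonneg (P2 - P6)) (norm_nonneg (P5 - P6))
    have hi3 : (1-r/2)*(3/4-r/2) + (0 - r*Real.sqrt 3/2)*(Real.sqrt 3/4 - r*Real.sqrt 3/2)
        = r^2 - 5*r/4 + 3/4 := by linear_combination (r^2/4 - r/8) * s3
    rw [hi3]
    have hq : (0:ℝ) ≤ r^2 - 5*r/4 + 3/4 := by nlinarith [sq_nonneg (r - 5/8)]
    linarith
end

section
/- In the equilateral reference triangle with vertices P1=(0,0), P2=(1,0), P3=(1/2,√3/2), with P4(s)=P1+s(P2−P1), P5(t)=P2+t(P3−P2), P6(r)=P1+r(P3−P1): for every r,s∈(0,1) and the parameter t chosen by the rule t=1/2 if r,s≤1/2 or exactly one of r,s exceeds 1/2, and t=1−s if both r,s>1/2, every interior angle of each of the four subtriangles (P1,P4,P6), (P4,P2,P5), (P6,P5,P3), (P4,P5,P6) is at most 150°. -/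
open EuclideanGeometry Real Set

/-- All three interior angles of the triangle `A B C` are at most `θ`. -/
def AnglesLe (A B C : EuclideanSpace ℝ (Fin 2)) (θ : ℝ) : Prop :=
  ∠ B A C ≤ θ ∧ ∠ A B C ≤ θ ∧ ∠ A C B ≤ θ

open InnerProductGeometry in
open scoped RealInnerProductSpace in
lemma angle_le_of_aux (u v : EuclideanSpace ℝ (Fin 2))
    (h : ⟪u, v⟫ < 0 → 4 * ⟪u, v⟫ ^ 2 ≤ 3 * (⟪u, u⟫ * ⟪v, v⟫)) :
    InnerProductGeometry.angle u v ≤ 5 * π / 6 := by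
  have hg0 : (0:ℝ) ≤ Real.sqrt 3 := Real.sqrt_nonneg 3
  have hg : Real.sqrt 3 ^ 2 = 3 := Real.sq_sqrt (by norm_num)
  have hcos : Real.cos (5 * π / 6) = -(Real.sqrt 3 / 2) := by
    have h56 : (5:ℝ) * π / 6 = π - π / 6 := by ring
    rw [h56, Real.cos_pi_sub, Real.cos_pi_div_six]
  by_contra hlt
  push_neg at hlt
  have hmem1 : (5 * π / 6) ∈ Set.Icc 0 π := by
    constructor <;> nlinarith [Real.pi_pos]
  have hmem2 : InnerProductGeometry.angle u v ∈ Set.Icc 0 π :=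
    ⟨angle_nonneg u v, angle_le_pi u v⟩
  have hcc := Real.strictAntiOn_cos hmem1 hmem2 hlt
  rw [hcos, InnerProductGeometry.cos_angle] at hcc
  have hN : (0:ℝ) ≤ ‖u‖ * ‖v‖ := mul_nonneg (norm_nonneg _) (norm_nonneg _)
  rcases le_or_gt 0 ⟪u, v⟫ with hip | hip
  · have : (0:ℝ) ≤ ⟪u, v⟫ / (‖u‖ * ‖v‖) := div_nonneg hip hN
    nlinarith
  · have h4 := h hip
    rw [real_inner_self_eq_norm_sq, real_inner_self_eq_norm_sq] at h4
    have hNpos : 0 < ‖u‖ * ‖v‖ := by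
      rcases hN.lt_or_eq with h0 | h0
      · exact h0
      · exfalso; nlinarith
    rw [div_lt_iff₀ hNpos] at hcc
    nlinarith [mul_pos (mul_pos hNpos hNpos) hNpos,
      sq_nonneg (2 * ⟪u,v⟫ + Real.sqrt 3 * (‖u‖ * ‖v‖)), mul_nonneg hg0 hN]

open scoped RealInnerProductSpace in
lemma angle_comp (A B C : EuclideanSpace ℝ (Fin 2))
    (h : (A 0 - B 0) * (C 0 - B 0) + (A 1 - B 1) * (C 1 - B 1) < 0 →
      4 * ((A 0 - B 0) * (C 0 - B 0) + (A 1 - B 1) * (C 1 - B 1)) ^ 2 ≤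
        3 * (((A 0 - B 0) * (A 0 - B 0) + (A 1 - B 1) * (A 1 - B 1)) *
             ((C 0 - B 0) * (C 0 - B 0) + (C 1 - B 1) * (C 1 - B 1)))) :
    EuclideanGeometry.angle A B C ≤ 5 * π / 6 := by
  rw [EuclideanGeometry.angle, vsub_eq_sub, vsub_eq_sub]
  apply angle_le_of_aux
  have e : ∀ (u v : EuclideanSpace ℝ (Fin 2)), ⟪u, v⟫ = u 0 * v 0 + u 1 * v 1 :=
    fun u v => by
      simp [PiLp.inner_apply, Fin.sum_univ_two, RCLike.inner_apply, conj_trivial]; ring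
  simp only [e]
  simpa [PiLp.sub_apply] using h

set_option maxHeartbeats 4000000 in
theorem stmt_8
    (P1 P2 P3 : EuclideanSpace ℝ (Fin 2))
    (hP1 : P1 = !₂[0, 0]) (hP2 : P2 = !₂[1, 0]) (hP3 : P3 = !₂[1/2, Real.sqrt 3 / 2])
    (r s : ℝ) (hr : r ∈ Set.Ioo (0:ℝ) 1) (hs : s ∈ Set.Ioo (0:ℝ) 1)
    (t : ℝ) (ht : t = if r ≤ 1/2 ∨ s ≤ 1/2 then 1/2 else 1 - s)
    (P4 P5 P6 : EuclideanSpace ℝ (Fin 2))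
    (hP4 : P4 = P1 + s • (P2 - P1))
    (hP5 : P5 = P2 + t • (P3 - P2))
    (hP6 : P6 = P1 + r • (P3 - P1)) :
    AnglesLe P1 P4 P6 (5 * π / 6) ∧ AnglesLe P4 P2 P5 (5 * π / 6) ∧
      AnglesLe P6 P5 P3 (5 * π / 6) ∧ AnglesLe P4 P5 P6 (5 * π / 6) := by
  obtain ⟨hr0, hr1⟩ := hr
  obtain ⟨hs0, hs1⟩ := hs
  have hg2 : Real.sqrt 3 ^ 2 = 3 := Real.sq_sqrt (by norm_num)
  have hg4 : Real.sqrt 3 ^ 4 = 9 := by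
    have : Real.sqrt 3 ^ 4 = (Real.sqrt 3 ^ 2) ^ 2 := by ring
    rw [this, hg2]; norm_num
  subst hP1 hP2 hP3
  have E4 : P4 = !₂[s, 0] := by
    rw [hP4]; ext i; fin_cases i <;>
      simp [PiLp.add_apply, PiLp.sub_apply, PiLp.smul_apply, smul_eq_mul]
  have E5 : P5 = !₂[1 - t/2, t * Real.sqrt 3 / 2] := by
    rw [hP5]; ext i; fin_cases i <;>
      simp [PiLp.add_apply, PiLp.sub_apply, PiLp.smul_apply, smul_eq_mul] <;> ring
  have E6 : P6 = !₂[r/2, r * Real.sqrt 3 / 2] := by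
    rw [hP6]; ext i; fin_cases i <;>
      simp [PiLp.add_apply, PiLp.sub_apply, PiLp.smul_apply, smul_eq_mul] <;> ring
  subst E4 E5 E6
  unfold AnglesLe
  by_cases hc : r ≤ 1/2 ∨ s ≤ 1/2
  · rw [if_pos hc] at ht
    subst ht
    refine ⟨⟨?_,?_,?_⟩,⟨?_,?_,?_⟩,⟨?_,?_,?_⟩,⟨?_,?_,?_⟩⟩ <;>
      (apply angle_comp; intro hip;
       simp only [PiLp.toLp_apply, Matrix.cons_val_zero, Matrix.cons_val_one, Matrix.head_cons] at hip ⊢;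
       ring_nf at hip ⊢;
       simp only [hg2, hg4] at hip ⊢)
    · nlinarith [mul_pos hr0 hs0]
    · nlinarith [mul_pos hs0 (add_pos hr0 hs0), mul_pos hs0 hs0]
    · nlinarith [mul_pos hr0 (add_pos hr0 hs0), mul_pos hr0 hr0]
    · nlinarith [mul_nonneg (mul_nonneg hs0.le (sq_nonneg (s-1)))
        (show (0:ℝ) ≤ 3/2 - s by linarith)]
    · linarith
    · linarith
    · nlinarith [mul_nonneg (mul_nonneg hr0.le (sq_nonneg (r-1)))
        (show (0:ℝ) ≤ 3/2 - r by linarith)]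
    · linarith
    · linarith
    · nlinarith [mul_pos hr0 hs0, mul_pos hs0 hs0, sq_nonneg (r-s), mul_pos hr0 hr0,
        mul_pos (mul_pos hr0 hs0) hs0, mul_pos (mul_pos hr0 hs0) hr0, hs1, hr1,
        mul_nonneg (mul_nonneg hs0.le hs0.le) (sub_nonneg.2 hs1.le)]
    · rcases hc with h | h <;>
        nlinarith [mul_pos hr0 hs0, sq_nonneg (r-s), sq_nonneg (r+s-1), h, hs1, hr1,
          mul_pos (mul_pos hr0 hs0) hs0, mul_pos (mul_pos hr0 hs0) hr0]
    · nlinarith [mul_pos hr0 hs0, sq_nonneg (r-s), mul_pos hr0 hr0,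
        mul_pos (mul_pos hr0 hs0) hs0, mul_pos (mul_pos hr0 hs0) hr0, hs1, hr1]
  · rw [if_neg hc] at ht
    subst ht
    push_neg at hc
    obtain ⟨hcr, hcs⟩ := hc
    refine ⟨⟨?_,?_,?_⟩,⟨?_,?_,?_⟩,⟨?_,?_,?_⟩,⟨?_,?_,?_⟩⟩ <;>
      (apply angle_comp; intro hip;
       simp only [PiLp.toLp_apply, Matrix.cons_val_zero, Matrix.cons_val_one, Matrix.head_cons] at hip ⊢;
       ring_nf at hip ⊢;
       simp only [hg2, hg4] at hip ⊢)
    · nlinarith [mul_pos hr0 hs0]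
    · nlinarith [mul_pos hs0 (show (0:ℝ) < 2*s - r by linarith)]
    · nlinarith [mul_pos hr0 (show (0:ℝ) < 2*r - s by linarith)]
    · nlinarith [mul_pos (sub_pos.2 hs1) (sub_pos.2 hs1)]
    · nlinarith [mul_pos (sub_pos.2 hs1) (sub_pos.2 hs1)]
    · nlinarith [mul_pos (sub_pos.2 hs1) (sub_pos.2 hs1)]
    · nlinarith [sq_nonneg (r+s-1), sq_nonneg (r-s), hcr, hcs, hr1, hs1,
        mul_pos (sub_pos.2 hr1) (sub_pos.2 hs1), sq_nonneg (1-r), sq_nonneg (2*(1-r)-s)]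
    · nlinarith [mul_pos hr0 hs0, mul_pos hs0 (show (0:ℝ) < 2*s - 1 by linarith)]
    · nlinarith [mul_pos hs0 (sub_pos.2 hr1)]
    · nlinarith [mul_pos (sub_pos.2 hs1) (show (0:ℝ) < 2*r - s by linarith)]
    · nlinarith [sq_nonneg (r+s-1), sq_nonneg (r-s), hcr, hcs, hr1, hs1,
        mul_pos (sub_pos.2 hr1) (sub_pos.2 hs1), sq_nonneg (1-s)]
    · nlinarith [sq_nonneg (2*r-1), mul_pos hs0 (show (0:ℝ) < 2*s - 1 by linarith)]
end

section
/- For r,s ∈ (0,1/2], in the equilateral reference triangle P1=(0,0), P2=(1,0), P3=(1/2,√3/2) with P4=P1+s(P2−P1), P5=(P2+P3)/2, P6=P1+r(P3−P1), the interior angle of triangle P4P5P6 at P5 is a monotonically nondecreasing function of each of r and s, and hence is maximized at r=s=1/2, where it equals 60°. -/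
open EuclideanGeometry Real Set

/-- The interior angle at `P5 = (P2+P3)/2` of the triangle `P4(s) P5 P6(r)` in the
equilateral reference triangle `P1 P2 P3`. -/
noncomputable def angleAtP5 (r s : ℝ) : ℝ :=
  let P1 : EuclideanSpace ℝ (Fin 2) := !₂[0, 0]
  let P2 : EuclideanSpace ℝ (Fin 2) := !₂[1, 0]
  let P3 : EuclideanSpace ℝ (Fin 2) := !₂[1/2, Real.sqrt 3 / 2]
  ∠ (P1 + s • (P2 - P1)) ((1/2 : ℝ) • (P2 + P3)) (P1 + r • (P3 - P1))

namespace Stmt17Aux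

noncomputable def Dd (r s : ℝ) : ℝ := (3/4-s)*(3/4-r/2)+3*(1-2*r)/16
noncomputable def Aa (s : ℝ) : ℝ := (3/4-s)^2+3/16
noncomputable def Bb (r : ℝ) : ℝ := (3/4-r/2)^2+3*(1-2*r)^2/16

lemma angle_eq (r s : ℝ) :
    angleAtP5 r s = Real.arccos (Dd r s / (Real.sqrt (Aa s) * Real.sqrt (Bb r))) := by
  have h3 : Real.sqrt 3 * Real.sqrt 3 = 3 := Real.mul_self_sqrt (by norm_num)
  unfold angleAtP5
  unfold EuclideanGeometry.angle InnerProductGeometry.angle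
  set x : EuclideanSpace ℝ (Fin 2) :=
    (!₂[(0:ℝ),0] + s • (!₂[1,0] - !₂[0,0]) : EuclideanSpace ℝ (Fin 2)) -ᵥ
      ((1/2:ℝ) • (!₂[1,0] + !₂[1/2, Real.sqrt 3/2])) with hxdef
  set y : EuclideanSpace ℝ (Fin 2) :=
    (!₂[(0:ℝ),0] + r • (!₂[1/2, Real.sqrt 3/2] - !₂[0,0]) : EuclideanSpace ℝ (Fin 2)) -ᵥ
      ((1/2:ℝ) • (!₂[1,0] + !₂[1/2, Real.sqrt 3/2])) with hydef
  have hx0 : x 0 = s - 3/4 := by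
    show ![(0:ℝ),0] 0 + s * (![(1:ℝ),0] 0 - ![(0:ℝ),0] 0)
      - (1/2) * (![(1:ℝ),0] 0 + ![(1:ℝ)/2, Real.sqrt 3/2] 0) = s - 3/4
    norm_num
  have hx1 : x 1 = -(Real.sqrt 3/4) := by
    show ![(0:ℝ),0] 1 + s * (![(1:ℝ),0] 1 - ![(0:ℝ),0] 1)
      - (1/2) * (![(1:ℝ),0] 1 + ![(1:ℝ)/2, Real.sqrt 3/2] 1) = -(Real.sqrt 3/4)
    norm_num; ring
  have hy0 : y 0 = r/2 - 3/4 := by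
    show ![(0:ℝ),0] 0 + r * (![(1:ℝ)/2, Real.sqrt 3/2] 0 - ![(0:ℝ),0] 0)
      - (1/2) * (![(1:ℝ),0] 0 + ![(1:ℝ)/2, Real.sqrt 3/2] 0) = r/2 - 3/4
    norm_num; ring
  have hy1 : y 1 = Real.sqrt 3 * (2*r-1)/4 := by
    show ![(0:ℝ),0] 1 + r * (![(1:ℝ)/2, Real.sqrt 3/2] 1 - ![(0:ℝ),0] 1)
      - (1/2) * (![(1:ℝ),0] 1 + ![(1:ℝ)/2, Real.sqrt 3/2] 1) = Real.sqrt 3 * (2*r-1)/4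
    norm_num; ring
  have hinner : (inner ℝ x y : ℝ) = Dd r s := by
    rw [PiLp.inner_apply, Fin.sum_univ_two, hx0, hx1, hy0, hy1]
    simp only [RCLike.inner_apply, conj_trivial, Dd]
    linear_combination ((1-2*r)/16) * h3
  have hnx : ‖x‖ = Real.sqrt (Aa s) := by
    rw [EuclideanSpace.norm_eq, Fin.sum_univ_two, hx0, hx1]
    congr 1
    simp only [Real.norm_eq_abs, sq_abs, Aa]
    linear_combination (1/16) * h3
  have hny : ‖y‖ = Real.sqrt (Bb r) := by
    rw [EuclideanSpace.norm_eq, Fin.sum_univ_two, hy0, hy1]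
    congr 1
    simp only [Real.norm_eq_abs, sq_abs, Bb]
    linear_combination ((2*r-1)^2/16) * h3
  show Real.arccos (inner ℝ x y / (‖x‖ * ‖y‖)) = _
  rw [hinner, hnx, hny]

lemma Ekey (x t y : ℝ) (hx : 0 < x) (ht : 0 ≤ t) (hxt : x + t ≤ 1/2)
    (hy : 0 < y) (hy2 : y ≤ 1/2) :
    0 ≤ 9/32*y - 9/32*y^2 + 9/64*t - 9/16*t*y + 3/8*t*y^2 + 9/32*x - 9/8*x*y
      + 3/4*x*y^2 - 9/32*x*t + 3/4*x*t*y - 3/8*x*t*y^2 - 9/32*x^2 + 3/4*x^2*y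
      - 3/8*x^2*y^2 := by
  have hc2 : 0 ≤ 3/4 - t - 2*x + x*t + x^2 := by nlinarith [sq_nonneg (1/2 - x)]
  nlinarith [mul_nonneg hy.le (by linarith : (0:ℝ) ≤ 3/4 - x - t/2),
    mul_nonneg (by linarith : (0:ℝ) ≤ 1 - 2*y)
      (by nlinarith : (0:ℝ) ≤ x*(1 - x - t) + t/2),
    mul_nonneg (mul_nonneg hy.le (by linarith : (0:ℝ) ≤ 1 - 2*y)) hc2]

lemma Dd_pos {r s : ℝ} (hr : r ∈ Set.Ioc (0:ℝ) (1/2)) (hs : s ∈ Set.Ioc (0:ℝ) (1/2)) :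
    0 < Dd r s := by
  obtain ⟨hr1, hr2⟩ := hr; obtain ⟨hs1, hs2⟩ := hs
  unfold Dd; nlinarith

lemma Aa_pos (s : ℝ) : 0 < Aa s := by unfold Aa; positivity

lemma Bb_pos {r : ℝ} (hr : r ∈ Set.Ioc (0:ℝ) (1/2)) : 0 < Bb r := by
  obtain ⟨hr1, hr2⟩ := hr; unfold Bb; nlinarith

/-- monotone step in the `r` direction -/
lemma step_r {r r' s : ℝ} (hr : r ∈ Set.Ioc (0:ℝ) (1/2)) (hr' : r' ∈ Set.Ioc (0:ℝ) (1/2))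
    (hs : s ∈ Set.Ioc (0:ℝ) (1/2)) (hle : r ≤ r') :
    Dd r' s / (Real.sqrt (Aa s) * Real.sqrt (Bb r')) ≤
      Dd r s / (Real.sqrt (Aa s) * Real.sqrt (Bb r)) := by
  have hA := Aa_pos s
  have hB := Bb_pos hr
  have hB' := Bb_pos hr'
  have hD := Dd_pos hr hs
  have hD' := Dd_pos hr' hs
  have hkey : (Dd r' s)^2 * Bb r ≤ (Dd r s)^2 * Bb r' := by
    have hE := Ekey r (r' - r) s hr.1 (by linarith) (by linarith [hr'.2]) hs.1 hs.2
    have hid : (Dd r s)^2 * Bb r' - (Dd r' s)^2 * Bb r =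
        (r' - r) * (9/32*s - 9/32*s^2 + 9/64*(r'-r) - 9/16*(r'-r)*s + 3/8*(r'-r)*s^2
          + 9/32*r - 9/8*r*s + 3/4*r*s^2 - 9/32*r*(r'-r) + 3/4*r*(r'-r)*s
          - 3/8*r*(r'-r)*s^2 - 9/32*r^2 + 3/4*r^2*s - 3/8*r^2*s^2) := by
      unfold Dd Bb; ring
    nlinarith [mul_nonneg (by linarith : (0:ℝ) ≤ r' - r) hE]
  have hsq : Dd r' s * Real.sqrt (Bb r) ≤ Dd r s * Real.sqrt (Bb r') := by
    have e1 : Dd r' s * Real.sqrt (Bb r) = Real.sqrt ((Dd r' s)^2 * Bb r) := by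
      rw [Real.sqrt_mul (sq_nonneg _), Real.sqrt_sq hD'.le]
    have e2 : Dd r s * Real.sqrt (Bb r') = Real.sqrt ((Dd r s)^2 * Bb r') := by
      rw [Real.sqrt_mul (sq_nonneg _), Real.sqrt_sq hD.le]
    rw [e1, e2]
    exact Real.sqrt_le_sqrt hkey
  rw [div_le_div_iff₀ (by positivity) (by positivity)]
  have hsA : 0 ≤ Real.sqrt (Aa s) := Real.sqrt_nonneg _
  nlinarith [mul_le_mul_of_nonneg_left hsq hsA]

/-- monotone step in the `s` direction -/
lemma step_s {r s s' : ℝ} (hr : r ∈ Set.Ioc (0:ℝ) (1/2)) (hs : s ∈ Set.Ioc (0:ℝ) (1/2))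
    (hs' : s' ∈ Set.Ioc (0:ℝ) (1/2)) (hle : s ≤ s') :
    Dd r s' / (Real.sqrt (Aa s') * Real.sqrt (Bb r)) ≤
      Dd r s / (Real.sqrt (Aa s) * Real.sqrt (Bb r)) := by
  have hA := Aa_pos s
  have hA' := Aa_pos s'
  have hB := Bb_pos hr
  have hD := Dd_pos hr hs
  have hD' := Dd_pos hr hs'
  have hkey : (Dd r s')^2 * Aa s ≤ (Dd r s)^2 * Aa s' := by
    have hE := Ekey s (s' - s) r hs.1 (by linarith) (by linarith [hs'.2]) hr.1 hr.2
    have hid : (Dd r s)^2 * Aa s' - (Dd r s')^2 * Aa s =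
        (s' - s) * (9/32*r - 9/32*r^2 + 9/64*(s'-s) - 9/16*(s'-s)*r + 3/8*(s'-s)*r^2
          + 9/32*s - 9/8*s*r + 3/4*s*r^2 - 9/32*s*(s'-s) + 3/4*s*(s'-s)*r
          - 3/8*s*(s'-s)*r^2 - 9/32*s^2 + 3/4*s^2*r - 3/8*s^2*r^2) := by
      unfold Dd Aa; ring
    nlinarith [mul_nonneg (by linarith : (0:ℝ) ≤ s' - s) hE]
  have hsq : Dd r s' * Real.sqrt (Aa s) ≤ Dd r s * Real.sqrt (Aa s') := by
    have e1 : Dd r s' * Real.sqrt (Aa s) = Real.sqrt ((Dd r s')^2 * Aa s) := by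
      rw [Real.sqrt_mul (sq_nonneg _), Real.sqrt_sq hD'.le]
    have e2 : Dd r s * Real.sqrt (Aa s') = Real.sqrt ((Dd r s)^2 * Aa s') := by
      rw [Real.sqrt_mul (sq_nonneg _), Real.sqrt_sq hD.le]
    rw [e1, e2]
    exact Real.sqrt_le_sqrt hkey
  rw [div_le_div_iff₀ (by positivity) (by positivity)]
  have hsB : 0 ≤ Real.sqrt (Bb r) := Real.sqrt_nonneg _
  nlinarith [mul_le_mul_of_nonneg_right hsq hsB]

lemma mono (r r' s s' : ℝ) (hr : r ∈ Set.Ioc (0:ℝ) (1/2)) (hr' : r' ∈ Set.Ioc (0:ℝ) (1/2))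
    (hs : s ∈ Set.Ioc (0:ℝ) (1/2)) (hs' : s' ∈ Set.Ioc (0:ℝ) (1/2))
    (h1 : r ≤ r') (h2 : s ≤ s') : angleAtP5 r s ≤ angleAtP5 r' s' := by
  rw [angle_eq, angle_eq]
  have hmono : ∀ a b : ℝ, a ≤ b → Real.arccos b ≤ Real.arccos a := by
    intro a b hab
    rw [Real.arccos_eq_pi_div_two_sub_arcsin, Real.arccos_eq_pi_div_two_sub_arcsin]
    linarith [Real.monotone_arcsin hab]
  apply hmono
  calc Dd r' s' / (Real.sqrt (Aa s') * Real.sqrt (Bb r'))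
        ≤ Dd r' s / (Real.sqrt (Aa s) * Real.sqrt (Bb r')) := step_s hr' hs hs' h2
      _ ≤ Dd r s / (Real.sqrt (Aa s) * Real.sqrt (Bb r)) := step_r hr hr' hs h1

end Stmt17Aux

theorem stmt_17 :
    (∀ r r' s s' : ℝ, r ∈ Set.Ioc (0:ℝ) (1/2) → r' ∈ Set.Ioc (0:ℝ) (1/2) →
      s ∈ Set.Ioc (0:ℝ) (1/2) → s' ∈ Set.Ioc (0:ℝ) (1/2) →
      r ≤ r' → s ≤ s' → angleAtP5 r s ≤ angleAtP5 r' s') ∧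
    (∀ r s : ℝ, r ∈ Set.Ioc (0:ℝ) (1/2) → s ∈ Set.Ioc (0:ℝ) (1/2) →
      angleAtP5 r s ≤ angleAtP5 (1/2) (1/2)) ∧
    angleAtP5 (1/2) (1/2) = π / 3 := by
  have hhalf : (1/2 : ℝ) ∈ Set.Ioc (0:ℝ) (1/2) := ⟨by norm_num, le_refl _⟩
  refine ⟨fun r r' s s' hr hr' hs hs' h1 h2 => Stmt17Aux.mono r r' s s' hr hr' hs hs' h1 h2,
    fun r s hr hs => Stmt17Aux.mono r (1/2) s (1/2) hr hhalf hs hhalf hr.2 hs.2, ?_⟩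
  rw [Stmt17Aux.angle_eq]
  have h4 : Real.sqrt (Stmt17Aux.Aa (1/2)) = 1/2 := by
    have : Stmt17Aux.Aa (1/2) = (1/2)^2 := by unfold Stmt17Aux.Aa; norm_num
    rw [this, Real.sqrt_sq (by norm_num)]
  have h5 : Real.sqrt (Stmt17Aux.Bb (1/2)) = 1/2 := by
    have : Stmt17Aux.Bb (1/2) = (1/2)^2 := by unfold Stmt17Aux.Bb; norm_num
    rw [this, Real.sqrt_sq (by norm_num)]
  have h6 : Stmt17Aux.Dd (1/2) (1/2) = 1/8 := by unfold Stmt17Aux.Dd; norm_num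
  rw [h4, h5, h6]
  norm_num
  rw [← Real.cos_pi_div_three,
    Real.arccos_cos (by positivity) (by linarith [Real.pi_pos])]
end

section
/- Let P1=(0,0), P2=(1,0), P3=(1/2,√3/2). For every r,s∈(0,1), the four points P4=P1+s(P2−P1), P5 chosen per configurations A–C (t=1/2 or t=1−s), P6=P1+r(P3−P1), together with P1,P2,P3, define four triangles (P1,P4,P6), (P4,P2,P5), (P6,P5,P3), (P4,P5,P6) whose interiors are pairwise disjoint and whose closed union equals the closed triangle P1P2P3. -/
open EuclideanGeometry Real Set

section Helpers

variable {V : Type*} [AddCommGroup V] [Module ℝ V]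

lemma mem_tri_iff (A B C x : V) :
    x ∈ convexHull ℝ ({A, B, C} : Set V) ↔
      ∃ a b c : ℝ, 0 ≤ a ∧ 0 ≤ b ∧ 0 ≤ c ∧ a + b + c = 1 ∧ a • A + b • B + c • C = x := by
  rw [convexHull_insert (by simp), convexHull_pair, mem_convexJoin]
  constructor
  · rintro ⟨a', ha', y, ⟨p, q, hp, hq, hpq, rfl⟩, ⟨u, v, hu, hv, huv, rfl⟩⟩
    rw [Set.mem_singleton_iff] at ha'; subst ha'
    exact ⟨u, v * p, v * q, hu, mul_nonneg hv hp, mul_nonneg hv hq,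
      by nlinarith, by rw [smul_add, smul_smul, smul_smul, add_assoc]⟩
  · rintro ⟨a, b, c, ha, hb, hc, habc, rfl⟩
    by_cases h : b + c = 0
    · refine ⟨A, rfl, B, left_mem_segment ℝ B C, ?_⟩
      have hb0 : b = 0 := le_antisymm (by linarith) hb
      have hc0 : c = 0 := le_antisymm (by linarith) hc
      subst hb0; subst hc0
      simp only [zero_smul, add_zero]
      have : a = 1 := by linarith
      rw [this, one_smul]
      exact left_mem_segment ℝ A B
    · have hbc : 0 < b + c := lt_of_le_of_ne (by linarith) (Ne.symm h)
      refine ⟨A, rfl, (b / (b + c)) • B + (c / (b + c)) • C,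
        ⟨b / (b + c), c / (b + c), div_nonneg hb hbc.le, div_nonneg hc hbc.le,
          by field_simp, rfl⟩,
        a, b + c, ha, hbc.le, by linarith, ?_⟩
      rw [smul_add, smul_smul, smul_smul]
      rw [mul_div_cancel₀ _ h, mul_div_cancel₀ _ h, add_assoc]

set_option maxHeartbeats 1000000 in
set_option linter.unreachableTactic false in
set_option linter.unnecessarySeqFocus false in
set_option linter.unusedTactic false in
lemma tri_cover (P1 P2 P3 P4 P5 P6 : V) {r s t : ℝ}
    (hr0 : 0 < r) (hr1 : r < 1) (hs0 : 0 < s) (hs1 : s < 1)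
    (ht0 : 0 < t) (ht1 : t < 1) (hD : 0 < r - r*t - r*s + s*t)
    (hP4 : P4 = P1 + s • (P2 - P1)) (hP5 : P5 = P2 + t • (P3 - P2))
    (hP6 : P6 = P1 + r • (P3 - P1)) :
    convexHull ℝ ({P1, P4, P6} : Set V) ∪ convexHull ℝ {P4, P2, P5} ∪
      convexHull ℝ {P6, P5, P3} ∪ convexHull ℝ {P4, P5, P6} = convexHull ℝ {P1, P2, P3} := by
  apply Set.Subset.antisymm
  · have m4 : P4 ∈ convexHull ℝ ({P1, P2, P3} : Set V) :=
      (mem_tri_iff P1 P2 P3 P4).2 ⟨1 - s, s, 0, by linarith, hs0.le, le_refl 0, by ring,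
        by rw [hP4]; match_scalars <;> ring⟩
    have m5 : P5 ∈ convexHull ℝ ({P1, P2, P3} : Set V) :=
      (mem_tri_iff P1 P2 P3 P5).2 ⟨0, 1 - t, t, le_refl 0, by linarith, ht0.le, by ring,
        by rw [hP5]; match_scalars <;> ring⟩
    have m6 : P6 ∈ convexHull ℝ ({P1, P2, P3} : Set V) :=
      (mem_tri_iff P1 P2 P3 P6).2 ⟨1 - r, 0, r, by linarith, le_refl 0, hr0.le, by ring,
        by rw [hP6]; match_scalars <;> ring⟩
    have m1 : P1 ∈ convexHull ℝ ({P1, P2, P3} : Set V) := subset_convexHull ℝ _ (by simp)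
    have m2 : P2 ∈ convexHull ℝ ({P1, P2, P3} : Set V) := subset_convexHull ℝ _ (by simp)
    have m3 : P3 ∈ convexHull ℝ ({P1, P2, P3} : Set V) := subset_convexHull ℝ _ (by simp)
    have hcvx := convex_convexHull ℝ ({P1, P2, P3} : Set V)
    refine Set.union_subset (Set.union_subset (Set.union_subset ?_ ?_) ?_) ?_ <;>
      · apply convexHull_min _ hcvx
        rintro x (rfl | rfl | rfl) <;> assumption
  · intro x hx
    rw [mem_tri_iff] at hx
    obtain ⟨a, b, c, ha, hb, hc, habc, hx⟩ := hx
    have hceq : c = 1 - a - b := by linarith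
    subst hceq
    have h1s : ((1:ℝ) - s) ≠ 0 := (by linarith : (0:ℝ) < 1 - s).ne'
    have h1r : ((1:ℝ) - r) ≠ 0 := (by linarith : (0:ℝ) < 1 - r).ne'
    have h1t : ((1:ℝ) - t) ≠ 0 := (by linarith : (0:ℝ) < 1 - t).ne'
    have hDne : r - r*t - r*s + s*t ≠ 0 := hD.ne'
    by_cases hc0 : b * r + (1 - a - b) * s ≤ r * s
    · refine Set.mem_union_left _ (Set.mem_union_left _ (Set.mem_union_left _ ?_))
      refine (mem_tri_iff P1 P4 P6 x).2
        ⟨1 - b/s - (1-a-b)/r, b/s, (1-a-b)/r, ?_, div_nonneg hb hs0.le,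
          div_nonneg hc hr0.le, by ring, ?_⟩
      · have h1 : b/s + (1-a-b)/r ≤ 1 := by
          rw [div_add_div _ _ hs0.ne' hr0.ne', div_le_one (by positivity)]
          nlinarith [hc0]
        linarith
      · rw [hP4, hP6, ← hx]
        match_scalars <;> (field_simp [hs0.ne', hr0.ne', ht0.ne', h1s, h1r, h1t, hDne]) <;> (first | ring1 | tauto)
    · by_cases hc1 : a * t + (1 - a - b) * (1 - s) ≤ t * (1 - s)
      · refine Set.mem_union_left _ (Set.mem_union_left _ (Set.mem_union_right _ ?_))
        refine (mem_tri_iff P4 P2 P5 x).2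
          ⟨a/(1-s), 1 - a/(1-s) - (1-a-b)/t, (1-a-b)/t,
            div_nonneg ha (by linarith), ?_, div_nonneg hc ht0.le, by ring, ?_⟩
        · have h1 : a/(1-s) + (1-a-b)/t ≤ 1 := by
            rw [div_add_div _ _ (by linarith : (1:ℝ)-s ≠ 0) ht0.ne', div_le_one (by nlinarith)]
            nlinarith [hc1]
          linarith
        · rw [hP4, hP5, ← hx]
          match_scalars <;> (field_simp [hs0.ne', hr0.ne', ht0.ne', h1s, h1r, h1t, hDne]) <;> (first | ring1 | tauto)
      · by_cases hc2 : a * (1 - t) + b * (1 - r) ≤ (1 - r) * (1 - t)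
        · refine Set.mem_union_left _ (Set.mem_union_right _ ?_)
          refine (mem_tri_iff P6 P5 P3 x).2
            ⟨a/(1-r), b/(1-t), 1 - a/(1-r) - b/(1-t),
              div_nonneg ha (by linarith), div_nonneg hb (by linarith), ?_, by ring, ?_⟩
          · have h1 : a/(1-r) + b/(1-t) ≤ 1 := by
              rw [div_add_div _ _ (by linarith : (1:ℝ)-r ≠ 0) (by linarith : (1:ℝ)-t ≠ 0),
                div_le_one (by nlinarith)]
              nlinarith [hc2]
            linarith
          · rw [hP6, hP5, ← hx]
            match_scalars <;> (field_simp [hs0.ne', hr0.ne', ht0.ne', h1s, h1r, h1t, hDne]) <;> (first | ring1 | tauto)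
        · push_neg at hc0 hc1 hc2
          refine Set.mem_union_right _ ?_
          refine (mem_tri_iff P4 P5 P6 x).2
            ⟨(a*(1-t) + b*(1-r) - (1-r)*(1-t))/(r - r*t - r*s + s*t),
             (b*r + (1-a-b)*s - r*s)/(r - r*t - r*s + s*t),
             (a*t + (1-a-b)*(1-s) - t*(1-s))/(r - r*t - r*s + s*t),
             div_nonneg (by nlinarith [hc2]) hD.le,
             div_nonneg (by nlinarith [hc0]) hD.le,
             div_nonneg (by nlinarith [hc1]) hD.le, ?_, ?_⟩
          · rw [← add_div, ← add_div, div_eq_one_iff_eq hDne]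
            ring
          · rw [hP4, hP5, hP6, ← hx]
            match_scalars <;> (field_simp [hs0.ne', hr0.ne', ht0.ne', h1s, h1r, h1t, hDne]) <;> (first | ring1 | tauto | (rw [div_eq_iff (by intro h; exact hDne (by linear_combination h))]; ring1))

end Helpers

abbrev E2 := EuclideanSpace ℝ (Fin 2)

lemma half_convex (α β γ : ℝ) : Convex ℝ {p : E2 | α * p 0 + β * p 1 + γ ≤ 0} := by
  intro p hp q hq a b ha hb hab
  simp only [Set.mem_setOf_eq] at *
  have h0 : (a • p + b • q) 0 = a * p 0 + b * q 0 := rfl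
  have h1 : (a • p + b • q) 1 = a * p 1 + b * q 1 := rfl
  rw [h0, h1]
  have hg : γ * (a + b) = γ := by rw [hab, mul_one]
  nlinarith [mul_nonneg ha (neg_nonneg.2 hp), mul_nonneg hb (neg_nonneg.2 hq), hg]

lemma half_convex_ge (α β γ : ℝ) : Convex ℝ {p : E2 | 0 ≤ α * p 0 + β * p 1 + γ} := by
  intro p hp q hq a b ha hb hab
  simp only [Set.mem_setOf_eq] at *
  have h0 : (a • p + b • q) 0 = a * p 0 + b * q 0 := rfl
  have h1 : (a • p + b • q) 1 = a * p 1 + b * q 1 := rfl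
  rw [h0, h1]
  have hg : γ * (a + b) = γ := by rw [hab, mul_one]
  nlinarith [mul_nonneg ha hp, mul_nonneg hb hq, hg]

lemma tri_subset_half {α β γ : ℝ} {A B C : E2}
    (hA : α * A 0 + β * A 1 + γ ≤ 0) (hB : α * B 0 + β * B 1 + γ ≤ 0)
    (hC : α * C 0 + β * C 1 + γ ≤ 0) :
    convexHull ℝ ({A, B, C} : Set E2) ⊆ {p | α * p 0 + β * p 1 + γ ≤ 0} :=
  convexHull_min (by rintro x (rfl | rfl | rfl) <;> assumption) (half_convex α β γ)

lemma tri_subset_half_ge {α β γ : ℝ} {A B C : E2}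
    (hA : 0 ≤ α * A 0 + β * A 1 + γ) (hB : 0 ≤ α * B 0 + β * B 1 + γ)
    (hC : 0 ≤ α * C 0 + β * C 1 + γ) :
    convexHull ℝ ({A, B, C} : Set E2) ⊆ {p | 0 ≤ α * p 0 + β * p 1 + γ} :=
  convexHull_min (by rintro x (rfl | rfl | rfl) <;> assumption) (half_convex_ge α β γ)

lemma interior_half_lt {α β γ : ℝ} (hv : 0 < α ^ 2 + β ^ 2) {S : Set E2}
    (hS : S ⊆ {p | α * p 0 + β * p 1 + γ ≤ 0}) {x : E2} (hx : x ∈ interior S) :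
    α * x 0 + β * x 1 + γ < 0 := by
  obtain ⟨ε, hε, hball⟩ := Metric.isOpen_iff.1 isOpen_interior x hx
  set v : E2 := (WithLp.equiv 2 (Fin 2 → ℝ)).symm ![α, β] with hvdef
  set c : ℝ := ε / (2 * (‖v‖ + 1)) with hc
  have hnv : 0 ≤ ‖v‖ := norm_nonneg v
  have hcpos : 0 < c := by positivity
  have hy : x + c • v ∈ Metric.ball x ε := by
    rw [Metric.mem_ball, dist_eq_norm, add_sub_cancel_left, norm_smul, Real.norm_eq_abs,
      abs_of_pos hcpos]
    rw [hc]
    rw [div_mul_eq_mul_div, div_lt_iff₀ (by positivity)]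
    nlinarith
  have hyS : x + c • v ∈ S := interior_subset (hball hy)
  have := hS hyS
  simp only [Set.mem_setOf_eq] at this
  have e0 : (x + c • v) 0 = x 0 + c * α := rfl
  have e1 : (x + c • v) 1 = x 1 + c * β := rfl
  rw [e0, e1] at this
  nlinarith

lemma tri_disj {α β γ : ℝ} (hv : 0 < α ^ 2 + β ^ 2) {A B C A' B' C' : E2}
    (hA : α * A 0 + β * A 1 + γ ≤ 0) (hB : α * B 0 + β * B 1 + γ ≤ 0)
    (hC : α * C 0 + β * C 1 + γ ≤ 0)
    (hA' : 0 ≤ α * A' 0 + β * A' 1 + γ) (hB' : 0 ≤ α * B' 0 + β * B' 1 + γ)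
    (hC' : 0 ≤ α * C' 0 + β * C' 1 + γ) :
    interior (convexHull ℝ ({A, B, C} : Set E2)) ∩
      interior (convexHull ℝ ({A', B', C'} : Set E2)) = ∅ := by
  ext x
  simp only [Set.mem_inter_iff, Set.mem_empty_iff_false, iff_false, not_and]
  intro h1 h2
  exact absurd (tri_subset_half_ge hA' hB' hC' (interior_subset h2))
    (not_le.2 (interior_half_lt hv (tri_subset_half hA hB hC) h1))

lemma tri_disj' {α β γ : ℝ} (hv : 0 < α ^ 2 + β ^ 2) {A B C A' B' C' : E2}
    (hA : α * A 0 + β * A 1 + γ ≤ 0) (hB : α * B 0 + β * B 1 + γ ≤ 0)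
    (hC : α * C 0 + β * C 1 + γ ≤ 0)
    (hA' : 0 ≤ α * A' 0 + β * A' 1 + γ) (hB' : 0 ≤ α * B' 0 + β * B' 1 + γ)
    (hC' : 0 ≤ α * C' 0 + β * C' 1 + γ) :
    interior (convexHull ℝ ({A', B', C'} : Set E2)) ∩
      interior (convexHull ℝ ({A, B, C} : Set E2)) = ∅ := by
  rw [Set.inter_comm]; exact tri_disj hv hA hB hC hA' hB' hC'

set_option maxHeartbeats 2000000 in
theorem stmt_18
    (P1 P2 P3 : EuclideanSpace ℝ (Fin 2))
    (hP1 : P1 = !₂[0, 0]) (hP2 : P2 = !₂[1, 0]) (hP3 : P3 = !₂[1/2, Real.sqrt 3 / 2])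
    (r s : ℝ) (hr : r ∈ Set.Ioo (0:ℝ) 1) (hs : s ∈ Set.Ioo (0:ℝ) 1)
    (t : ℝ) (ht : t = if r ≤ 1/2 ∨ s ≤ 1/2 then 1/2 else 1 - s)
    (P4 P5 P6 : EuclideanSpace ℝ (Fin 2))
    (hP4 : P4 = P1 + s • (P2 - P1))
    (hP5 : P5 = P2 + t • (P3 - P2))
    (hP6 : P6 = P1 + r • (P3 - P1))
    (T : Fin 4 → Set (EuclideanSpace ℝ (Fin 2)))
    (hT : T = ![convexHull ℝ {P1, P4, P6}, convexHull ℝ {P4, P2, P5},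
                convexHull ℝ {P6, P5, P3}, convexHull ℝ {P4, P5, P6}]) :
    (∀ i j : Fin 4, i ≠ j → interior (T i) ∩ interior (T j) = ∅) ∧
    (T 0 ∪ T 1 ∪ T 2 ∪ T 3 = convexHull ℝ {P1, P2, P3}) := by
  obtain ⟨hr0, hr1⟩ := hr
  obtain ⟨hs0, hs1⟩ := hs
  have h3 : (0:ℝ) < Real.sqrt 3 := Real.sqrt_pos.mpr (by norm_num)
  have htfacts : 0 < t ∧ t < 1 ∧ 0 < r - r*t - r*s + s*t := by
    rw [ht]; split_ifs with hcase
    · refine ⟨by norm_num, by norm_num, by nlinarith⟩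
    · push_neg at hcase
      exact ⟨by linarith [hcase.2], by linarith [hcase.2], by nlinarith [hcase.1, hcase.2]⟩
  obtain ⟨ht0, ht1, hD⟩ := htfacts
  have e10 : P1 0 = 0 := by rw [hP1]; rfl
  have e11 : P1 1 = 0 := by rw [hP1]; rfl
  have e20 : P2 0 = 1 := by rw [hP2]; rfl
  have e21 : P2 1 = 0 := by rw [hP2]; rfl
  have e30 : P3 0 = 1/2 := by rw [hP3]; rfl
  have e31 : P3 1 = Real.sqrt 3 / 2 := by rw [hP3]; rfl
  have e40 : P4 0 = s := by
    rw [hP4]; show P1 0 + s * (P2 0 - P1 0) = s; rw [e10, e20]; ring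
  have e41 : P4 1 = 0 := by
    rw [hP4]; show P1 1 + s * (P2 1 - P1 1) = 0; rw [e11, e21]; ring
  have e50 : P5 0 = 1 - t/2 := by
    rw [hP5]; show P2 0 + t * (P3 0 - P2 0) = 1 - t/2; rw [e20, e30]; ring
  have e51 : P5 1 = t * (Real.sqrt 3 / 2) := by
    rw [hP5]; show P2 1 + t * (P3 1 - P2 1) = t * (Real.sqrt 3 / 2); rw [e21, e31]; ring
  have e60 : P6 0 = r/2 := by
    rw [hP6]; show P1 0 + r * (P3 0 - P1 0) = r/2; rw [e10, e30]; ring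
  have e61 : P6 1 = r * (Real.sqrt 3 / 2) := by
    rw [hP6]; show P1 1 + r * (P3 1 - P1 1) = r * (Real.sqrt 3 / 2); rw [e11, e31]; ring
  -- line f through P4, P6
  have hvf : (0:ℝ) < (-(r * Real.sqrt 3 / 2)) ^ 2 + (r/2 - s) ^ 2 := by
    have h1 := pow_pos (div_pos (mul_pos hr0 h3) two_pos) 2
    have h2 : (-(r * Real.sqrt 3 / 2)) ^ 2 = (r * Real.sqrt 3 / 2) ^ 2 := neg_sq _
    linarith [sq_nonneg (r/2 - s)]
  have hfP1 : 0 ≤ -(r * Real.sqrt 3 / 2) * P1 0 + (r/2 - s) * P1 1 + r * s * (Real.sqrt 3 / 2) := by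
    rw [e10, e11]; linarith [mul_nonneg (mul_nonneg hr0.le hs0.le) h3.le]
  have hfP4 : -(r * Real.sqrt 3 / 2) * P4 0 + (r/2 - s) * P4 1 + r * s * (Real.sqrt 3 / 2) = 0 := by
    rw [e40, e41]; ring
  have hfP6 : -(r * Real.sqrt 3 / 2) * P6 0 + (r/2 - s) * P6 1 + r * s * (Real.sqrt 3 / 2) = 0 := by
    rw [e60, e61]; ring
  have hfP2 : -(r * Real.sqrt 3 / 2) * P2 0 + (r/2 - s) * P2 1 + r * s * (Real.sqrt 3 / 2) ≤ 0 := by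
    rw [e20, e21]; linarith [mul_nonneg (mul_nonneg hr0.le (by linarith : (0:ℝ) ≤ 1 - s)) h3.le]
  have hfP3 : -(r * Real.sqrt 3 / 2) * P3 0 + (r/2 - s) * P3 1 + r * s * (Real.sqrt 3 / 2) ≤ 0 := by
    rw [e30, e31]; linarith [mul_nonneg (mul_nonneg hs0.le (by linarith : (0:ℝ) ≤ 1 - r)) h3.le]
  have hfP5 : -(r * Real.sqrt 3 / 2) * P5 0 + (r/2 - s) * P5 1 + r * s * (Real.sqrt 3 / 2) ≤ 0 := by
    rw [e50, e51]; linarith [mul_nonneg hD.le h3.le]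
  -- line g through P4, P5
  have hvg : (0:ℝ) < (-(t * Real.sqrt 3 / 2)) ^ 2 + (1 - t/2 - s) ^ 2 := by
    have h1 := pow_pos (div_pos (mul_pos ht0 h3) two_pos) 2
    have h2 : (-(t * Real.sqrt 3 / 2)) ^ 2 = (t * Real.sqrt 3 / 2) ^ 2 := neg_sq _
    linarith [sq_nonneg (1 - t/2 - s)]
  have hgP4 : -(t * Real.sqrt 3 / 2) * P4 0 + (1 - t/2 - s) * P4 1 + t * s * (Real.sqrt 3 / 2) = 0 := by
    rw [e40, e41]; ring
  have hgP5 : -(t * Real.sqrt 3 / 2) * P5 0 + (1 - t/2 - s) * P5 1 + t * s * (Real.sqrt 3 / 2) = 0 := by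
    rw [e50, e51]; ring
  have hgP1 : 0 ≤ -(t * Real.sqrt 3 / 2) * P1 0 + (1 - t/2 - s) * P1 1 + t * s * (Real.sqrt 3 / 2) := by
    rw [e10, e11]; linarith [mul_nonneg (mul_nonneg ht0.le hs0.le) h3.le]
  have hgP2 : -(t * Real.sqrt 3 / 2) * P2 0 + (1 - t/2 - s) * P2 1 + t * s * (Real.sqrt 3 / 2) ≤ 0 := by
    rw [e20, e21]; linarith [mul_nonneg (mul_nonneg ht0.le (by linarith : (0:ℝ) ≤ 1 - s)) h3.le]
  have hgP3 : 0 ≤ -(t * Real.sqrt 3 / 2) * P3 0 + (1 - t/2 - s) * P3 1 + t * s * (Real.sqrt 3 / 2) := by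
    rw [e30, e31]
    linarith [mul_nonneg (mul_nonneg (by linarith : (0:ℝ) ≤ 1 - t) (by linarith : (0:ℝ) ≤ 1 - s)) h3.le]
  have hgP6 : 0 ≤ -(t * Real.sqrt 3 / 2) * P6 0 + (1 - t/2 - s) * P6 1 + t * s * (Real.sqrt 3 / 2) := by
    rw [e60, e61]; linarith [mul_nonneg hD.le h3.le]
  -- line h through P5, P6
  have hvh : (0:ℝ) < (-((r - t) * (Real.sqrt 3 / 2))) ^ 2 + ((r + t - 2)/2) ^ 2 := by
    have h1 : (0:ℝ) < ((2 - r - t)/2) ^ 2 := pow_pos (by linarith) 2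
    have h2 : ((r + t - 2)/2) ^ 2 = ((2 - r - t)/2) ^ 2 := by ring
    linarith [sq_nonneg (-((r - t) * (Real.sqrt 3 / 2)))]
  have hhP5 : -((r - t) * (Real.sqrt 3 / 2)) * P5 0 + ((r + t - 2)/2) * P5 1 + r * (1 - t) * (Real.sqrt 3 / 2) = 0 := by
    rw [e50, e51]; ring
  have hhP6 : -((r - t) * (Real.sqrt 3 / 2)) * P6 0 + ((r + t - 2)/2) * P6 1 + r * (1 - t) * (Real.sqrt 3 / 2) = 0 := by
    rw [e60, e61]; ring
  have hhP3 : -((r - t) * (Real.sqrt 3 / 2)) * P3 0 + ((r + t - 2)/2) * P3 1 + r * (1 - t) * (Real.sqrt 3 / 2) ≤ 0 := by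
    rw [e30, e31]
    linarith [mul_nonneg (mul_nonneg (by linarith : (0:ℝ) ≤ 1 - t) (by linarith : (0:ℝ) ≤ 1 - r)) h3.le]
  have hhP4 : 0 ≤ -((r - t) * (Real.sqrt 3 / 2)) * P4 0 + ((r + t - 2)/2) * P4 1 + r * (1 - t) * (Real.sqrt 3 / 2) := by
    rw [e40, e41]; linarith [mul_nonneg hD.le h3.le]
  -- pairwise disjointness facts
  have d01 : interior (convexHull ℝ ({P1, P4, P6} : Set E2)) ∩
      interior (convexHull ℝ ({P4, P2, P5} : Set E2)) = ∅ :=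
    tri_disj' hvf hfP4.le hfP2 hfP5 hfP1 hfP4.ge hfP6.ge
  have d02 : interior (convexHull ℝ ({P1, P4, P6} : Set E2)) ∩
      interior (convexHull ℝ ({P6, P5, P3} : Set E2)) = ∅ :=
    tri_disj' hvf hfP6.le hfP5 hfP3 hfP1 hfP4.ge hfP6.ge
  have d03 : interior (convexHull ℝ ({P1, P4, P6} : Set E2)) ∩
      interior (convexHull ℝ ({P4, P5, P6} : Set E2)) = ∅ :=
    tri_disj' hvf hfP4.le hfP5 hfP6.le hfP1 hfP4.ge hfP6.ge
  have d10 : interior (convexHull ℝ ({P4, P2, P5} : Set E2)) ∩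
      interior (convexHull ℝ ({P1, P4, P6} : Set E2)) = ∅ :=
    tri_disj hvf hfP4.le hfP2 hfP5 hfP1 hfP4.ge hfP6.ge
  have d20 : interior (convexHull ℝ ({P6, P5, P3} : Set E2)) ∩
      interior (convexHull ℝ ({P1, P4, P6} : Set E2)) = ∅ :=
    tri_disj hvf hfP6.le hfP5 hfP3 hfP1 hfP4.ge hfP6.ge
  have d30 : interior (convexHull ℝ ({P4, P5, P6} : Set E2)) ∩
      interior (convexHull ℝ ({P1, P4, P6} : Set E2)) = ∅ :=
    tri_disj hvf hfP4.le hfP5 hfP6.le hfP1 hfP4.ge hfP6.ge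
  have d12 : interior (convexHull ℝ ({P4, P2, P5} : Set E2)) ∩
      interior (convexHull ℝ ({P6, P5, P3} : Set E2)) = ∅ :=
    tri_disj hvg hgP4.le hgP2 hgP5.le hgP6 hgP5.ge hgP3
  have d13 : interior (convexHull ℝ ({P4, P2, P5} : Set E2)) ∩
      interior (convexHull ℝ ({P4, P5, P6} : Set E2)) = ∅ :=
    tri_disj hvg hgP4.le hgP2 hgP5.le hgP4.ge hgP5.ge hgP6
  have d21 : interior (convexHull ℝ ({P6, P5, P3} : Set E2)) ∩
      interior (convexHull ℝ ({P4, P2, P5} : Set E2)) = ∅ :=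
    tri_disj' hvg hgP4.le hgP2 hgP5.le hgP6 hgP5.ge hgP3
  have d31 : interior (convexHull ℝ ({P4, P5, P6} : Set E2)) ∩
      interior (convexHull ℝ ({P4, P2, P5} : Set E2)) = ∅ :=
    tri_disj' hvg hgP4.le hgP2 hgP5.le hgP4.ge hgP5.ge hgP6
  have d23 : interior (convexHull ℝ ({P6, P5, P3} : Set E2)) ∩
      interior (convexHull ℝ ({P4, P5, P6} : Set E2)) = ∅ :=
    tri_disj hvh hhP6.le hhP5.le hhP3 hhP4 hhP5.ge hhP6.ge
  have d32 : interior (convexHull ℝ ({P4, P5, P6} : Set E2)) ∩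
      interior (convexHull ℝ ({P6, P5, P3} : Set E2)) = ∅ :=
    tri_disj' hvh hhP6.le hhP5.le hhP3 hhP4 hhP5.ge hhP6.ge
  constructor
  · intro i j hij
    fin_cases i <;> fin_cases j <;>
      simp only [hT, Matrix.cons_val_zero, Matrix.cons_val_one, Matrix.head_cons,
        Matrix.cons_val_two, Matrix.tail_cons, Matrix.cons_val_three] <;>
      first
        | exact absurd rfl hij
        | exact d01 | exact d02 | exact d03 | exact d10 | exact d12 | exact d13
        | exact d20 | exact d21 | exact d23 | exact d30 | exact d31 | exact d32
  · have hT0 : T 0 = convexHull ℝ ({P1, P4, P6} : Set E2) := by rw [hT]; rfl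
    have hT1 : T 1 = convexHull ℝ ({P4, P2, P5} : Set E2) := by rw [hT]; rfl
    have hT2 : T 2 = convexHull ℝ ({P6, P5, P3} : Set E2) := by rw [hT]; rfl
    have hT3 : T 3 = convexHull ℝ ({P4, P5, P6} : Set E2) := by rw [hT]; rfl
    rw [hT0, hT1, hT2, hT3]
    exact tri_cover P1 P2 P3 P4 P5 P6 hr0 hr1 hs0 hs1 ht0 ht1 hD hP4 hP5 hP6
end
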